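/- Let q be a prime power, F a finite field with q elements, and n a positive integer with n | q - 1. Then there exists a ∈ F such that the polynomial X^n - a is irreducible over F. -/

import Mathlib

open Polynomial IntermediateField

/-- Auxiliary number-theoretic lemma: if `n ∣ q - 1` and `n * (q - 1) ∣ q ^ d - 1`,
then `n ∣ d`. -/
lemma aux_dvd_of_mul_dvd (q n d : ℕ) (hq : 2 ≤ q) (hn : 0 < n) (hdvd : n ∣ q - 1)
    (h : n * (q - 1) ∣ q ^ d - 1) : n ∣ d := by
  haveI : NeZero n := ⟨hn.ne'⟩
  have hqd : 1 ≤ q ^ d := Nat.one_le_pow _ _ (by omega)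
  -- cast to ℤ
  have hZ : ((n : ℤ) * ((q : ℤ) - 1)) ∣ (q : ℤ) ^ d - 1 := by
    have h' := Int.natCast_dvd_natCast.mpr h
    push_cast [Nat.cast_sub (by omega : 1 ≤ q), Nat.cast_sub hqd] at h'
    exact_mod_cast h'
  have hgeom : ((q : ℤ) - 1) * (∑ i ∈ Finset.range d, (q : ℤ) ^ i) = (q : ℤ) ^ d - 1 := by
    rw [mul_comm]; exact geom_sum_mul _ d
  rw [← hgeom, mul_comm (n : ℤ)] at hZ
  have hq1' : ((q : ℤ) - 1) ≠ 0 := by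
    have : (2 : ℤ) ≤ (q : ℤ) := by exact_mod_cast hq
    omega
  have hns : (n : ℤ) ∣ ∑ i ∈ Finset.range d, (q : ℤ) ^ i :=
    (mul_dvd_mul_iff_left hq1').mp hZ
  -- pass to ZMod n
  have hqmod : ((q : ℤ) : ZMod n) = 1 := by
    have h0 : ((q - 1 : ℕ) : ZMod n) = 0 := (ZMod.natCast_eq_zero_iff _ _).mpr hdvd
    have hq' : q = (q - 1) + 1 := by omega
    have hnat : ((q : ℕ) : ZMod n) = 1 := by
      conv_lhs => rw [hq']
      rw [Nat.cast_add, Nat.cast_one, h0, zero_add]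
    rw [Int.cast_natCast, hnat]
  have hd0 : ((d : ℕ) : ZMod n) = 0 := by
    have h2 : ((∑ i ∈ Finset.range d, (q : ℤ) ^ i : ℤ) : ZMod n) = 0 := by
      obtain ⟨c, hc⟩ := hns
      rw [hc]
      push_cast
      simp
    rw [Int.cast_sum] at h2
    simp only [Int.cast_pow, hqmod, one_pow, Finset.sum_const, Finset.card_range,
      nsmul_eq_mul, mul_one] at h2
    exact_mod_cast h2
  exact (ZMod.natCast_eq_zero_iff _ _).mp hd0

/-- If `n ∣ q - 1`, there exists `a` in the finite field `F` with `q` elements such that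
`X^n - a` is irreducible over `F`. -/
theorem exists_irreducible_binomial_of_dvd_sub_one
    (q n : ℕ) (hq : IsPrimePow q) (hn : 0 < n) (hdvd : n ∣ q - 1)
    (F : Type*) [Field F] [Fintype F] (hF : Fintype.card F = q) :
    ∃ a : F, Irreducible (X ^ n - C a : F[X]) := by
  classical
  have hq2 : 2 ≤ q := hq.two_le
  have hq1 : 0 < q - 1 := by omega
  set K := AlgebraicClosure F
  set m := n * (q - 1) with hm
  have hm0 : 0 < m := Nat.mul_pos hn hq1
  -- the characteristic does not divide m
  haveI : NeZero ((m : ℕ) : K) := by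
    constructor
    intro h0
    have hmF : ((m : ℕ) : F) = 0 := by
      apply (algebraMap F K).injective
      rw [map_natCast, h0, map_zero]
    have hpm : ringChar F ∣ m := (ringChar.spec F m).mp (by exact_mod_cast hmF)
    obtain ⟨np', hp', h'⟩ := FiniteField.card F (ringChar F)
    have hpq : ringChar F ∣ q := by
      rw [← hF, h']
      exact dvd_pow_self _ np'.pos.ne'
    have hmd : m ∣ (q - 1) * (q - 1) := mul_dvd_mul hdvd dvd_rfl
    have hp1 : ringChar F ∣ q - 1 := by
      rcases (Nat.Prime.dvd_mul hp').mp (hpm.trans hmd) with h | h <;> exact h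
    have h1 : ringChar F ∣ 1 := by
      have := Nat.dvd_sub hpq hp1
      rwa [Nat.sub_sub_self (by omega)] at this
    exact hp'.one_lt.ne' (Nat.eq_one_of_dvd_one h1)
  -- a primitive m-th root of unity in the algebraic closure
  obtain ⟨ζ, hζ⟩ := HasEnoughRootsOfUnity.exists_primitiveRoot K m
  -- ζ^n is a primitive (q-1)-th root of unity, hence lies in (the image of) F
  have hζn : IsPrimitiveRoot (ζ ^ n) (q - 1) := hζ.pow hm0 hm
  have key : ∃ b : F, algebraMap F K b = ζ ^ n := by
    set T := Polynomial.nthRootsFinset (q - 1) (1 : K) with hT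
    set S := Finset.univ.image (fun u : Fˣ => algebraMap F K (u : F)) with hS
    have hST : S ⊆ T := by
      intro y hy
      simp only [hS, Finset.mem_image, Finset.mem_univ, true_and] at hy
      obtain ⟨u, rfl⟩ := hy
      rw [Polynomial.mem_nthRootsFinset hq1, ← map_pow, ← hF,
        FiniteField.pow_card_sub_one_eq_one (u : F) u.ne_zero, map_one]
    have hcardS : S.card = q - 1 := by
      rw [hS, Finset.card_image_of_injective _
        (fun a b hab => Units.ext ((algebraMap F K).injective hab)),
        Finset.card_univ, Fintype.card_units, hF]
    have hTS : T ⊆ S := by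
      have hTcard : T.card ≤ q - 1 := by
        rw [hT, Polynomial.nthRootsFinset_def]
        exact (Multiset.toFinset_card_le _).trans (Polynomial.card_nthRoots _ _)
      rw [Finset.eq_of_subset_of_card_le hST (hTcard.trans hcardS.ge)]
    have hmem : ζ ^ n ∈ T := by
      rw [hT, Polynomial.mem_nthRootsFinset hq1, ← pow_mul, ← hm]
      exact hζ.pow_eq_one
    obtain ⟨u, -, hu⟩ := Finset.mem_image.mp (hTS hmem)
    exact ⟨u, hu⟩
  obtain ⟨a, ha⟩ := key
  refine ⟨a, ?_⟩
  -- ζ is integral over F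
  have hint : IsIntegral F ζ := Algebra.IsIntegral.isIntegral ζ
  set P := minpoly F ζ with hP
  set d := P.natDegree with hd
  have hd1 : 0 < d := minpoly.natDegree_pos hint
  -- minpoly divides X^n - C a
  have hPdvd : P ∣ (X ^ n - C a : F[X]) := by
    apply minpoly.dvd
    rw [map_sub, map_pow, aeval_X, aeval_C, ha, sub_self]
  -- the degree of the minimal polynomial is at least n
  have hmdvd : m ∣ q ^ d - 1 := by
    haveI : FiniteDimensional F F⟮ζ⟯ := IntermediateField.adjoin.finiteDimensional hint
    haveI : Finite F⟮ζ⟯ := Module.finite_of_finite F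
    haveI : Fintype F⟮ζ⟯ := Fintype.ofFinite _
    have hcardL : Fintype.card F⟮ζ⟯ = q ^ d := by
      rw [Module.card_eq_pow_finrank (K := F) (V := F⟮ζ⟯), hF, IntermediateField.adjoin.finrank hint]
    set ζ' : F⟮ζ⟯ := IntermediateField.AdjoinSimple.gen F ζ with hζ'
    have hζ'0 : ζ' ≠ 0 := by
      intro h0
      apply hζ.ne_zero hm0.ne'
      rw [← IntermediateField.AdjoinSimple.algebraMap_gen F ζ, ← hζ', h0, map_zero]
    have h1 : ζ' ^ (Fintype.card F⟮ζ⟯ - 1) = 1 := FiniteField.pow_card_sub_one_eq_one ζ' hζ'0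
    have h2 : ζ ^ (q ^ d - 1) = 1 := by
      have := congrArg (algebraMap F⟮ζ⟯ K) h1
      rw [map_pow, map_one, hcardL, hζ', IntermediateField.AdjoinSimple.algebraMap_gen] at this
      exact this
    exact hζ.dvd_of_pow_eq_one _ h2
  have hnd : n ∣ d := aux_dvd_of_mul_dvd q n d hq2 hn hdvd (hm ▸ hmdvd)
  have hled : n ≤ d := Nat.le_of_dvd hd1 hnd
  -- conclude
  have hne : (X ^ n - C a : F[X]) ≠ 0 := X_pow_sub_C_ne_zero hn a
  have hassoc : Associated P (X ^ n - C a : F[X]) :=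
    associated_of_dvd_of_natDegree_le hPdvd hne (by rw [natDegree_X_pow_sub_C]; exact hled)
  have heq : P = (X ^ n - C a : F[X]) :=
    eq_of_monic_of_associated (minpoly.monic hint) (monic_X_pow_sub_C a hn.ne') hassoc
  rw [← heq]
  exact minpoly.irreducible hint
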